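/- Let σ ∈ (0,1), AA*f_σ = σ²f_σ, ‖f_σ‖ = 1. In the basis e₁ := (A*/σ)f_σ ⊕ 0, e₂ := 0 ⊕ (B*/√(1−σ²))f_σ of the two-dimensional subspace ℒ_σ, the operator ∏_{k=1}^n W_k acts by the 2×2 matrix [[Π_n(σ²), iΦ_n(σ²)σ√(1−σ²)],[iΦ̄_n(σ²)σ√(1−σ²), Π̄_n(σ²)]]. Consequently, this 2×2 matrix equals ∏_{k=1}^n e^{iθ_k Z} U_σ e^{iφ_k Z} U_σ, where Z = diag(1,−1) and U_σ = [[σ, √(1−σ²)],[√(1−σ²), −σ]]. -/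

import Mathlib

open ContinuousLinearMap Complex Submodule Polynomial in
private lemma conj_exp_aux (r : ℝ) :
    (starRingEnd ℂ) (Complex.exp (r * Complex.I)) = Complex.exp (-r * Complex.I) := by
  rw [← Complex.exp_conj]; congr 1
  simp [map_mul, Complex.conj_I, Complex.conj_ofReal]

private lemma conj_exp_aux' (r : ℝ) :
    (starRingEnd ℂ) (Complex.exp (-r * Complex.I)) = Complex.exp (r * Complex.I) := by
  rw [← Complex.exp_conj]; congr 1
  simp [map_mul, Complex.conj_I, Complex.conj_ofReal]

private lemma exp_mul_exp_neg_aux (r : ℝ) :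
    Complex.exp (r * Complex.I) * Complex.exp (-r * Complex.I) = 1 := by
  rw [← Complex.exp_add]; ring_nf; exact Complex.exp_zero

private lemma exp_sub_exp_neg_aux (r : ℝ) :
    Complex.exp (r * Complex.I) - Complex.exp (-r * Complex.I)
      = 2 * Complex.I * Complex.sin r := by
  rw [Complex.sin]
  linear_combination (Complex.exp (r*Complex.I) - Complex.exp (-r*Complex.I)) * Complex.I_sq

private lemma eval_map_conj_aux (p : Polynomial ℂ) (x : ℂ) (hx : (starRingEnd ℂ) x = x) :
    (p.map (starRingEnd ℂ)).eval x = (starRingEnd ℂ) (p.eval x) := by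
  induction p using Polynomial.induction_on' with
  | add p q hp hq => simp [hp, hq]
  | monomial n a => simp [Polynomial.eval_monomial, map_mul, map_pow, hx]

private lemma map_conj_conj_aux (p : Polynomial ℂ) :
    (p.map (starRingEnd ℂ)).map (starRingEnd ℂ) = p := by
  rw [Polynomial.map_map]
  convert Polynomial.map_id using 2
  exact RingHom.ext fun z => Complex.conj_conj z

private lemma inner_orthogonalProjection_left_eq_right_aux {H : Type*} [NormedAddCommGroup H]
    [InnerProductSpace ℂ H] (K : Submodule ℂ H) [K.HasOrthogonalProjection] (u v : H) :
    inner ℂ ((K.orthogonalProjectionOnto u : K) : H) v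
      = inner ℂ u ((K.orthogonalProjectionOnto v : K) : H) :=
  Submodule.inner_starProjection_left_eq_right K u v

private lemma orthogonalProjection_add_orthogonalProjection_orthogonal_aux {H : Type*}
    [NormedAddCommGroup H] [InnerProductSpace ℂ H] (K : Submodule ℂ H)
    [K.HasOrthogonalProjection] (w : H) :
    ((K.orthogonalProjectionOnto w : K) : H) + ((Kᗮ.orthogonalProjectionOnto w : Kᗮ) : H) = w :=
  Submodule.starProjection_add_starProjection_orthogonal w

private lemma sub_orthogonalProjection_mem_orthogonal_aux {H : Type*} [NormedAddCommGroup H]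
    [InnerProductSpace ℂ H] {K : Submodule ℂ H} [K.HasOrthogonalProjection] (v : H) :
    v - ((K.orthogonalProjectionOnto v : K) : H) ∈ Kᗮ :=
  Submodule.sub_starProjection_mem_orthogonal v

set_option maxHeartbeats 1000000 in
open ContinuousLinearMap Complex Submodule Polynomial in
theorem stmt16
    {H : Type*} [NormedAddCommGroup H] [InnerProductSpace ℂ H] [CompleteSpace H]
    (𝔥 𝔨 : Submodule ℂ H) [CompleteSpace 𝔥] [CompleteSpace 𝔨]
    (U : H →L[ℂ] H) (hU1 : adjoint U ∘L U = 1) (hU2 : U ∘L adjoint U = 1)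
    (A : 𝔥 →L[ℂ] 𝔨) (B : 𝔥ᗮ →L[ℂ] 𝔨) (C : 𝔥 →L[ℂ] 𝔨ᗮ) (D : 𝔥ᗮ →L[ℂ] 𝔨ᗮ)
    (hA : ∀ x : 𝔥, A x = orthogonalProjection 𝔨 (U x))
    (hB : ∀ y : 𝔥ᗮ, B y = orthogonalProjection 𝔨 (U y))
    (hC : ∀ x : 𝔥, C x = orthogonalProjection 𝔨ᗮ (U x))
    (hD : ∀ y : 𝔥ᗮ, D y = orthogonalProjection 𝔨ᗮ (U y))
    (θ φ : ℕ → ℝ) (W Wn : ℕ → (H →L[ℂ] H))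
    (hWdef : ∀ k, W k = (Complex.exp (θ k * Complex.I) • (𝔥.subtypeL ∘L orthogonalProjection 𝔥) +
          Complex.exp (-θ k * Complex.I) • (1 - 𝔥.subtypeL ∘L orthogonalProjection 𝔥)) ∘L
        (adjoint U ∘L
          ((Complex.exp (φ k * Complex.I) • (𝔨.subtypeL ∘L orthogonalProjection 𝔨) +
            Complex.exp (-φ k * Complex.I) • (1 - 𝔨.subtypeL ∘L orthogonalProjection 𝔨)) ∘L U)))
    (hWn0 : Wn 0 = 1) (hWnS : ∀ n, Wn (n + 1) = W (n + 1) ∘L Wn n)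
    (Pp Qp : ℕ → Polynomial ℂ)
    (hPp : ∀ n, Pp n = Polynomial.C (Complex.exp (θ n * Complex.I) * Complex.exp (-φ n * Complex.I)) +
      Polynomial.C (Complex.exp (θ n * Complex.I) * (2 * Complex.I * Real.sin (φ n))) * Polynomial.X)
    (hQp : ∀ n, Qp n = Polynomial.C (2 * Complex.exp (θ n * Complex.I) * Real.sin (φ n)))
    (Pi' Φ' : ℕ → Polynomial ℂ)
    (hPi0 : Pi' 0 = 1) (hΦ0 : Φ' 0 = 0)
    (hPi : ∀ n : ℕ, 1 ≤ n → Pi' n = Pp n * Pi' (n - 1) -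
      Qp n * (Φ' (n - 1)).map (starRingEnd ℂ) * (1 - Polynomial.X) * Polynomial.X)
    (hΦ : ∀ n : ℕ, 1 ≤ n → Φ' n = Pp n * Φ' (n - 1) +
      Qp n * (Pi' (n - 1)).map (starRingEnd ℂ))
    (σ : ℝ) (hσ : σ ∈ Set.Ioo (0 : ℝ) 1) (fσ : 𝔨) (hfnorm : ‖fσ‖ = 1)
    (hf : A (adjoint A fσ) = ((σ : ℂ) ^ 2) • fσ)
    (e₁ e₂ : H)
    (he₁ : e₁ = ((σ : ℂ))⁻¹ • ((adjoint A fσ : 𝔥) : H))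
    (he₂ : e₂ = ((Real.sqrt (1 - σ ^ 2) : ℂ))⁻¹ • ((adjoint B fσ : 𝔥ᗮ) : H))
    (Uσ Zm : Matrix (Fin 2) (Fin 2) ℂ)
    (hUσ : Uσ = !![(σ : ℂ), (Real.sqrt (1 - σ ^ 2) : ℂ); (Real.sqrt (1 - σ ^ 2) : ℂ), -(σ : ℂ)])
    (Mprod : ℕ → Matrix (Fin 2) (Fin 2) ℂ)
    (hM0 : Mprod 0 = 1)
    (hMS : ∀ n, Mprod (n + 1) =
      !![Complex.exp (θ (n + 1) * Complex.I), 0; 0, Complex.exp (-θ (n + 1) * Complex.I)] * Uσ *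
      !![Complex.exp (φ (n + 1) * Complex.I), 0; 0, Complex.exp (-φ (n + 1) * Complex.I)] * Uσ *
      Mprod n)
    (n : ℕ) :
    (Wn n e₁ = (Pi' n).eval ((σ : ℂ) ^ 2) • e₁ +
      (Complex.I * ((Φ' n).map (starRingEnd ℂ)).eval ((σ : ℂ) ^ 2) *
        (σ : ℂ) * (Real.sqrt (1 - σ ^ 2) : ℂ)) • e₂) ∧
    (Wn n e₂ = (Complex.I * (Φ' n).eval ((σ : ℂ) ^ 2) *
        (σ : ℂ) * (Real.sqrt (1 - σ ^ 2) : ℂ)) • e₁ +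
      ((Pi' n).map (starRingEnd ℂ)).eval ((σ : ℂ) ^ 2) • e₂) ∧
    Mprod n = !![(Pi' n).eval ((σ : ℂ) ^ 2),
        Complex.I * (Φ' n).eval ((σ : ℂ) ^ 2) * (σ : ℂ) * (Real.sqrt (1 - σ ^ 2) : ℂ);
        Complex.I * ((Φ' n).map (starRingEnd ℂ)).eval ((σ : ℂ) ^ 2) *
          (σ : ℂ) * (Real.sqrt (1 - σ ^ 2) : ℂ),
        ((Pi' n).map (starRingEnd ℂ)).eval ((σ : ℂ) ^ 2)] := by
  obtain ⟨hσ0, hσ1⟩ := hσ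
  set t : ℝ := Real.sqrt (1 - σ ^ 2) with htdef
  have ht0 : (0:ℝ) < t := Real.sqrt_pos.mpr (by nlinarith)
  have ht2 : (t:ℂ)^2 = 1 - (σ:ℂ)^2 := by
    have h : t^2 = 1 - σ^2 := Real.sq_sqrt (by nlinarith)
    rw [← Complex.ofReal_pow, h]; push_cast; ring
  have hσC : (σ:ℂ) ≠ 0 := by exact_mod_cast hσ0.ne'
  have htC : (t:ℂ) ≠ 0 := by exact_mod_cast ht0.ne'
  -- adjoint decomposition
  have hUadj : adjoint U (fσ : H) = ((adjoint A fσ : 𝔥) : H) + ((adjoint B fσ : 𝔥ᗮ) : H) := by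
    have h1 : (adjoint A fσ : 𝔥) = orthogonalProjection 𝔥 (adjoint U (fσ : H)) := by
      apply ext_inner_right ℂ
      intro y
      rw [ContinuousLinearMap.adjoint_inner_left, Submodule.coe_inner, hA y,
        ← inner_orthogonalProjection_left_eq_right_aux, orthogonalProjection_mem_subspace_eq_self,
        ← ContinuousLinearMap.adjoint_inner_left, Submodule.coe_inner,
        inner_orthogonalProjection_left_eq_right_aux, orthogonalProjection_mem_subspace_eq_self]
    have h2 : (adjoint B fσ : 𝔥ᗮ) = orthogonalProjection 𝔥ᗮ (adjoint U (fσ : H)) := by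
      apply ext_inner_right ℂ
      intro y
      rw [ContinuousLinearMap.adjoint_inner_left, Submodule.coe_inner, hB y,
        ← inner_orthogonalProjection_left_eq_right_aux, orthogonalProjection_mem_subspace_eq_self,
        ← ContinuousLinearMap.adjoint_inner_left, Submodule.coe_inner,
        inner_orthogonalProjection_left_eq_right_aux, orthogonalProjection_mem_subspace_eq_self]
    rw [h1, h2, orthogonalProjection_add_orthogonalProjection_orthogonal_aux]
  have hUg : adjoint U (fσ : H) = (σ:ℂ) • e₁ + (t:ℂ) • e₂ := by
    rw [hUadj, he₁, he₂, smul_smul, smul_smul, mul_inv_cancel₀ hσC, mul_inv_cancel₀ htC,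
      one_smul, one_smul]
  have hUUa : ∀ v : H, U (adjoint U v) = v := fun v => by
    have h := ContinuousLinearMap.ext_iff.mp hU2 v; simpa using h
  have haUU : ∀ v : H, adjoint U (U v) = v := fun v => by
    have h := ContinuousLinearMap.ext_iff.mp hU1 v; simpa using h
  have he₁mem : e₁ ∈ 𝔥 := by rw [he₁]; exact 𝔥.smul_mem _ (adjoint A fσ).2
  have he₂mem : e₂ ∈ 𝔥ᗮ := by rw [he₂]; exact 𝔥ᗮ.smul_mem _ (adjoint B fσ).2
  have hPUe₁ : orthogonalProjection 𝔨 (U e₁) = (σ:ℂ) • fσ := by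
    have h : orthogonalProjection 𝔨 (U e₁) = (σ:ℂ)⁻¹ • (((σ:ℂ)^2) • fσ) := by
      rw [he₁, map_smul, map_smul, ← hA, hf]
    rw [h, smul_smul]
    congr 1
    field_simp
  set w : H := U e₁ - (σ:ℂ) • (fσ:H) with hwdef
  have hw : w ∈ 𝔨ᗮ := by
    have h := sub_orthogonalProjection_mem_orthogonal_aux (K := 𝔨) (U e₁)
    rw [hPUe₁] at h
    simpa [hwdef] using h
  have hUe₁ : U e₁ = (σ:ℂ) • (fσ:H) + w := by rw [hwdef]; abel
  have hUe₂ : U e₂ = (t:ℂ) • (fσ:H) - ((σ:ℂ)/(t:ℂ)) • w := by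
    have h1 : U ((σ:ℂ) • e₁ + (t:ℂ) • e₂) = (fσ:H) := by rw [← hUg, hUUa]
    rw [map_add, map_smul, map_smul, hUe₁] at h1
    have h3 : (t:ℂ) • U e₂ = (fσ:H) - (σ:ℂ) • ((σ:ℂ) • (fσ:H) + w) :=
      (sub_eq_of_eq_add' h1.symm).symm
    calc U e₂ = (t:ℂ)⁻¹ • ((t:ℂ) • U e₂) := (inv_smul_smul₀ htC _).symm
    _ = (t:ℂ) • (fσ:H) - ((σ:ℂ)/(t:ℂ)) • w := by
        rw [h3]
        match_scalars
        · field_simp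
          linear_combination -ht2
        · field_simp
  have hUaw : adjoint U w = ((t:ℂ)^2) • e₁ - ((σ:ℂ)*(t:ℂ)) • e₂ := by
    rw [hwdef, map_sub, map_smul, haUU, hUg]
    match_scalars
    · linear_combination -ht2
    · ring
  have hKg : orthogonalProjection 𝔨 (fσ : H) = fσ :=
    orthogonalProjection_mem_subspace_eq_self fσ
  have hKw : orthogonalProjection 𝔨 w = 0 :=
    orthogonalProjection_mem_subspace_orthogonalComplement_eq_zero hw
  have hHe₁ : ((orthogonalProjection 𝔥 e₁ : 𝔥) : H) = e₁ := by
    have h := orthogonalProjection_mem_subspace_eq_self (K := 𝔥) ⟨e₁, he₁mem⟩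
    rw [show ((⟨e₁, he₁mem⟩ : 𝔥) : H) = e₁ from rfl] at h
    rw [h]
  have hHe₂ : orthogonalProjection 𝔥 e₂ = 0 :=
    orthogonalProjection_mem_subspace_orthogonalComplement_eq_zero he₂mem
  -- action of W k on e₁ and e₂
  have hWe1 : ∀ k, W k e₁ =
      (Complex.exp (θ k * I) * Complex.exp (-φ k * I)
        + Complex.exp (θ k * I) * (2*I*(Real.sin (φ k):ℂ)) * (σ:ℂ)^2) • e₁
      + ((2 * Complex.exp (-θ k * I) * (Real.sin (φ k):ℂ)) * I * (σ:ℂ) * (t:ℂ)) • e₂ := by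
    intro k
    rw [hWdef k]
    simp only [comp_apply, add_apply, smul_apply, sub_apply, one_apply_eq_self, subtypeL_apply,
      map_add, map_smul, map_sub, hUe₁, hKg, hKw, ZeroMemClass.coe_zero, map_zero, smul_zero, add_zero, zero_add, sub_zero, zero_smul,
      hUg, hUaw, hHe₂, hHe₁]
    match_scalars
    · have hs := exp_sub_exp_neg_aux (φ k)
      simp only [neg_mul] at hs ⊢
      linear_combination (Complex.exp (θ k * I)) * (σ:ℂ)^2 * hs
        + (Complex.exp (θ k * I)) * Complex.exp (-(φ k * I)) * ht2
    · have hs := exp_sub_exp_neg_aux (φ k)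
      simp only [neg_mul] at hs ⊢
      linear_combination (σ:ℂ)*(t:ℂ)*Complex.exp (-(θ k * I)) * hs
  have hWe2 : ∀ k, W k e₂ =
      ((2 * Complex.exp (θ k * I) * (Real.sin (φ k):ℂ)) * I * (σ:ℂ) * (t:ℂ)) • e₁
      + (Complex.exp (-θ k * I) * Complex.exp (φ k * I)
        + Complex.exp (-θ k * I) * (-(2*I*(Real.sin (φ k):ℂ))) * (σ:ℂ)^2) • e₂ := by
    intro k
    rw [hWdef k]
    simp only [comp_apply, add_apply, smul_apply, sub_apply, one_apply_eq_self, subtypeL_apply,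
      map_add, map_smul, map_sub, hUe₂, hKg, hKw, ZeroMemClass.coe_zero, map_zero, smul_zero, add_zero, zero_add, sub_zero, zero_smul,
      sub_zero, hUg, hUaw, hHe₂, hHe₁]
    match_scalars
    · have hs := exp_sub_exp_neg_aux (φ k)
      simp only [neg_mul] at hs ⊢
      field_simp
      linear_combination Complex.exp (I * θ k) * hs
    · have hs := exp_sub_exp_neg_aux (φ k)
      simp only [neg_mul] at hs ⊢
      field_simp
      linear_combination Complex.exp (φ k * I) * ht2
        - (σ:ℂ)^2 * hs
  -- the induction
  induction n with
  | zero =>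
    refine ⟨?_, ?_, ?_⟩
    · simp [hWn0, hPi0, hΦ0]
    · simp [hWn0, hPi0, hΦ0]
    · rw [hM0, hPi0, hΦ0]
      simp [Matrix.one_fin_two]
  | succ n ih =>
    obtain ⟨ih1, ih2, ih3⟩ := ih
    have hx : (starRingEnd ℂ) ((σ:ℂ)^2) = (σ:ℂ)^2 := by
      rw [map_pow, Complex.conj_ofReal]
    have hPiS := hPi (n+1) n.succ_pos
    have hΦS := hΦ (n+1) n.succ_pos
    rw [Nat.add_sub_cancel] at hPiS hΦS
    have hBC : ((Φ' n).map (starRingEnd ℂ)).eval ((σ:ℂ)^2)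
        = (starRingEnd ℂ) ((Φ' n).eval ((σ:ℂ)^2)) := eval_map_conj_aux _ _ hx
    have hDC : ((Pi' n).map (starRingEnd ℂ)).eval ((σ:ℂ)^2)
        = (starRingEnd ℂ) ((Pi' n).eval ((σ:ℂ)^2)) := eval_map_conj_aux _ _ hx
    have hA1 : (Pi' (n+1)).eval ((σ:ℂ)^2) =
        (Complex.exp (θ (n+1) * I) * Complex.exp (-φ (n+1) * I)
          + Complex.exp (θ (n+1) * I) * (2*I*(Real.sin (φ (n+1)):ℂ)) * (σ:ℂ)^2)
            * (Pi' n).eval ((σ:ℂ)^2)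
        - (2 * Complex.exp (θ (n+1) * I) * (Real.sin (φ (n+1)):ℂ))
            * ((Φ' n).map (starRingEnd ℂ)).eval ((σ:ℂ)^2) * (1-(σ:ℂ)^2) * (σ:ℂ)^2 := by
      rw [hPiS]
      simp only [eval_mul, eval_sub, eval_add, eval_one, eval_X, eval_C, hPp, hQp]
    have hC1 : (Φ' (n+1)).eval ((σ:ℂ)^2) =
        (Complex.exp (θ (n+1) * I) * Complex.exp (-φ (n+1) * I)
          + Complex.exp (θ (n+1) * I) * (2*I*(Real.sin (φ (n+1)):ℂ)) * (σ:ℂ)^2)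
            * (Φ' n).eval ((σ:ℂ)^2)
        + (2 * Complex.exp (θ (n+1) * I) * (Real.sin (φ (n+1)):ℂ))
            * ((Pi' n).map (starRingEnd ℂ)).eval ((σ:ℂ)^2) := by
      rw [hΦS]
      simp only [eval_mul, eval_add, eval_X, eval_C, hPp, hQp]
    have hD1 : ((Pi' (n+1)).map (starRingEnd ℂ)).eval ((σ:ℂ)^2) =
        (Complex.exp (-θ (n+1) * I) * Complex.exp (φ (n+1) * I)
          + Complex.exp (-θ (n+1) * I) * (-(2*I*(Real.sin (φ (n+1)):ℂ))) * (σ:ℂ)^2)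
            * ((Pi' n).map (starRingEnd ℂ)).eval ((σ:ℂ)^2)
        - (2 * Complex.exp (-θ (n+1) * I) * (Real.sin (φ (n+1)):ℂ))
            * (Φ' n).eval ((σ:ℂ)^2) * (1-(σ:ℂ)^2) * (σ:ℂ)^2 := by
      rw [eval_map_conj_aux _ _ hx, hA1]
      simp only [hBC, hDC, map_sub, map_add, map_mul, map_one, map_ofNat, map_pow,
        Complex.conj_I, Complex.conj_ofReal, Complex.conj_conj, conj_exp_aux, conj_exp_aux']
      ring
    have hB1 : ((Φ' (n+1)).map (starRingEnd ℂ)).eval ((σ:ℂ)^2) =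
        (Complex.exp (-θ (n+1) * I) * Complex.exp (φ (n+1) * I)
          + Complex.exp (-θ (n+1) * I) * (-(2*I*(Real.sin (φ (n+1)):ℂ))) * (σ:ℂ)^2)
            * ((Φ' n).map (starRingEnd ℂ)).eval ((σ:ℂ)^2)
        + (2 * Complex.exp (-θ (n+1) * I) * (Real.sin (φ (n+1)):ℂ))
            * (Pi' n).eval ((σ:ℂ)^2) := by
      rw [eval_map_conj_aux _ _ hx, hC1]
      simp only [hBC, hDC, map_add, map_mul, map_one, map_ofNat, map_pow,
        Complex.conj_I, Complex.conj_ofReal, Complex.conj_conj, conj_exp_aux, conj_exp_aux']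
      ring
    refine ⟨?_, ?_, ?_⟩
    · rw [hWnS n, ContinuousLinearMap.comp_apply, ih1, map_add, map_smul, map_smul,
        hWe1 (n+1), hWe2 (n+1), hA1, hB1]
      match_scalars
      · linear_combination
          (2 * Complex.exp (θ (n+1) * I) * Complex.sin (φ (n+1)) *
            (((Φ' n).map (starRingEnd ℂ)).eval ((σ:ℂ)^2)) * (σ:ℂ)^2 * (t:ℂ)^2) * Complex.I_sq
          - (2 * Complex.exp (θ (n+1) * I) * Complex.sin (φ (n+1)) *
            (((Φ' n).map (starRingEnd ℂ)).eval ((σ:ℂ)^2)) * (σ:ℂ)^2) * ht2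
      · ring
    · rw [hWnS n, ContinuousLinearMap.comp_apply, ih2, map_add, map_smul, map_smul,
        hWe1 (n+1), hWe2 (n+1), hC1, hD1]
      match_scalars
      · ring
      · linear_combination
          (2 * Complex.exp (-θ (n+1) * I) * Complex.sin (φ (n+1)) *
            ((Φ' n).eval ((σ:ℂ)^2)) * (σ:ℂ)^2 * (t:ℂ)^2) * Complex.I_sq
          - (2 * Complex.exp (-θ (n+1) * I) * Complex.sin (φ (n+1)) *
            ((Φ' n).eval ((σ:ℂ)^2)) * (σ:ℂ)^2) * ht2
    · have hs' := exp_sub_exp_neg_aux (φ (n+1))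
      rw [← Complex.ofReal_sin] at hs'
      rw [hMS n, ih3, hUσ, hA1, hB1, hC1, hD1, Matrix.mul_fin_two, Matrix.mul_fin_two,
        Matrix.mul_fin_two, Matrix.mul_fin_two]
      ext i j
      fin_cases i <;> fin_cases j <;>
        simp only [Fin.isValue, Matrix.cons_val', Matrix.cons_val_zero, Matrix.cons_val_one,
          Matrix.head_cons, Matrix.empty_val', Matrix.cons_val_fin_one, Matrix.head_fin_const,
          Matrix.of_apply, Matrix.cons_val_zero, Fin.zero_eta, Fin.mk_one]
      · linear_combination
          (Complex.exp (θ (n+1) * I) * ((Pi' n).eval ((σ:ℂ)^2)) * (σ:ℂ)^2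
            + I * Complex.exp (θ (n+1) * I) * (σ:ℂ)^2 *
              (((Φ' n).map (starRingEnd ℂ)).eval ((σ:ℂ)^2)) * (t:ℂ)^2) * hs'
          + (Complex.exp (θ (n+1) * I) * ((Pi' n).eval ((σ:ℂ)^2)) * Complex.exp (-φ (n+1) * I)
            - 2 * Complex.exp (θ (n+1) * I) * (Real.sin (φ (n+1)):ℂ) *
              (((Φ' n).map (starRingEnd ℂ)).eval ((σ:ℂ)^2)) * (σ:ℂ)^2) * ht2
          + (2 * Complex.exp (θ (n+1) * I) * (Real.sin (φ (n+1)):ℂ) *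
              (((Φ' n).map (starRingEnd ℂ)).eval ((σ:ℂ)^2)) * (σ:ℂ)^2 * (t:ℂ)^2) * Complex.I_sq
      · linear_combination
          (Complex.exp (θ (n+1) * I) * I * (σ:ℂ) * (t:ℂ) * ((Φ' n).eval ((σ:ℂ)^2)) * (σ:ℂ)^2
            + Complex.exp (θ (n+1) * I) * (σ:ℂ) * (t:ℂ) *
              (((Pi' n).map (starRingEnd ℂ)).eval ((σ:ℂ)^2))) * hs'
          + (Complex.exp (θ (n+1) * I) * I * (σ:ℂ) * (t:ℂ) * ((Φ' n).eval ((σ:ℂ)^2))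
              * Complex.exp (-φ (n+1) * I)) * ht2
      · linear_combination
          (Complex.exp (-θ (n+1) * I) * (σ:ℂ) * (t:ℂ) * ((Pi' n).eval ((σ:ℂ)^2))
            - Complex.exp (-θ (n+1) * I) * I * (σ:ℂ) * (t:ℂ) *
              (((Φ' n).map (starRingEnd ℂ)).eval ((σ:ℂ)^2)) * (σ:ℂ)^2) * hs'
          + (Complex.exp (-θ (n+1) * I) * I * (σ:ℂ) * (t:ℂ) *
              (((Φ' n).map (starRingEnd ℂ)).eval ((σ:ℂ)^2)) * Complex.exp (φ (n+1) * I)) * ht2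
      · linear_combination
          (Complex.exp (-θ (n+1) * I) * I * (σ:ℂ)^2 *
              ((Φ' n).eval ((σ:ℂ)^2)) * (t:ℂ)^2
            - Complex.exp (-θ (n+1) * I) *
              (((Pi' n).map (starRingEnd ℂ)).eval ((σ:ℂ)^2)) * (σ:ℂ)^2) * hs'
          + (Complex.exp (-θ (n+1) * I) *
              (((Pi' n).map (starRingEnd ℂ)).eval ((σ:ℂ)^2)) * Complex.exp (φ (n+1) * I)
            - 2 * Complex.exp (-θ (n+1) * I) * (Real.sin (φ (n+1)):ℂ) *
              ((Φ' n).eval ((σ:ℂ)^2)) * (σ:ℂ)^2) * ht2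
          + (2 * Complex.exp (-θ (n+1) * I) * (Real.sin (φ (n+1)):ℂ) *
              ((Φ' n).eval ((σ:ℂ)^2)) * (σ:ℂ)^2 * (t:ℂ)^2) * Complex.I_sq
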